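/- Fix d ≥ 1, vectors v_1, …, v_{d+1} ∈ ℝ^d satisfying the simplex conditions, transaction cost coefficients κ_k⁺, κ_k⁻ ≥ 0 (k = 1, …, d), and an invertible d×d real matrix σ. Suppose that |x (σᵀ)^{-1}| < 1/(2√d) for every row vector x ∈ Π_{j=1}^d [−(κ_j⁻+κ_j⁺), κ_j⁻+κ_j⁺]. Then for every β ∈ B, the matrix σᵀ + β is invertible and v_i β (σᵀ+β)^{-1} v_jᵀ > −1 for all i, j ∈ {1, …, d+1} (v_i treated as row vectors). -/

import Mathlib

open scoped BigOperators
open Matrix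

/-- The set `B` of matrices whose `k`-th column is `∑ⱼ w_{jk} vⱼᵀ` with
`w_{jk} ∈ [0, (κₖ⁺+κₖ⁻)/(d+1)]`. -/
def simplexB (d : ℕ) (v : Fin (d + 1) → Fin d → ℝ) (κp κm : Fin d → ℝ) :
    Set (Matrix (Fin d) (Fin d) ℝ) :=
  {β | ∃ w : Fin (d + 1) → Fin d → ℝ,
      (∀ j k, w j k ∈ Set.Icc (0 : ℝ) ((κp k + κm k) / (d + 1))) ∧
      ∀ a k, β a k = ∑ j, w j k * v j a}

/-- Column-orthogonality of simplex vectors: `∑ⱼ vⱼₐ vⱼᵦ = (d+1) δₐᵦ`. -/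
lemma simplex_gram_cols (d : ℕ) (v : Fin (d + 1) → Fin d → ℝ)
    (hgram : ∀ i j, ∑ a, v i a * v j a = if i = j then (d : ℝ) else -1) :
    ∀ a b, ∑ j, v j a * v j b = if a = b then (d : ℝ) + 1 else 0 := by
  classical
  have hrow : ∀ i : Fin (d + 1), ∑ j, (if i = j then (d : ℝ) else -1) = 0 := by
    intro i
    have h : ∀ j : Fin (d + 1), (if i = j then (d : ℝ) else -1)
        = (if i = j then (d : ℝ) + 1 else 0) + (-1) := by
      intro j; split <;> ring
    rw [Finset.sum_congr rfl fun j _ => h j, Finset.sum_add_distrib,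
      Finset.sum_ite_eq]
    simp [Finset.card_univ]
  have hvsum : ∀ a, ∑ j, v j a = 0 := by
    have h0 : ∑ a, (∑ j, v j a) ^ 2 = 0 := by
      calc ∑ a, (∑ j, v j a) ^ 2
          = ∑ a, ∑ i, ∑ j, v i a * v j a := by
            refine Finset.sum_congr rfl fun a _ => ?_
            rw [sq, Finset.sum_mul_sum]
        _ = ∑ i, ∑ a, ∑ j, v i a * v j a := Finset.sum_comm
        _ = ∑ i, ∑ j, ∑ a, v i a * v j a :=
            Finset.sum_congr rfl fun i _ => Finset.sum_comm
        _ = ∑ i, ∑ j, (if i = j then (d : ℝ) else -1) :=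
            Finset.sum_congr rfl fun i _ => Finset.sum_congr rfl fun j _ => hgram i j
        _ = 0 := by simp [hrow]
    intro a
    have h1 := (Finset.sum_eq_zero_iff_of_nonneg (fun a _ => sq_nonneg _)).1 h0 a
      (Finset.mem_univ a)
    exact pow_eq_zero_iff two_ne_zero |>.mp h1
  set G : Matrix (Fin d) (Fin d) ℝ := Matrix.of fun a b => ∑ j, v j a * v j b with hGdef
  have hGG : G * G = ((d : ℝ) + 1) • G := by
    ext a b
    simp only [Matrix.mul_apply, Matrix.smul_apply, Matrix.of_apply, smul_eq_mul, hGdef]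
    calc ∑ c, (∑ j, v j a * v j c) * (∑ j', v j' c * v j' b)
        = ∑ c, ∑ j, ∑ j', (v j a * v j' b) * (v j c * v j' c) := by
          refine Finset.sum_congr rfl fun c _ => ?_
          rw [Finset.sum_mul_sum]
          exact Finset.sum_congr rfl fun j _ => Finset.sum_congr rfl fun j' _ => by ring
      _ = ∑ j, ∑ j', ∑ c, (v j a * v j' b) * (v j c * v j' c) := by
          rw [Finset.sum_comm]
          exact Finset.sum_congr rfl fun j _ => Finset.sum_comm
      _ = ∑ j, ∑ j', (v j a * v j' b) * (if j = j' then (d : ℝ) else -1) := by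
          refine Finset.sum_congr rfl fun j _ => Finset.sum_congr rfl fun j' _ => ?_
          rw [← Finset.mul_sum, hgram]
      _ = ∑ j, ∑ j', ((if j = j' then ((d : ℝ) + 1) * (v j a * v j' b) else 0)
            - v j a * v j' b) := by
          refine Finset.sum_congr rfl fun j _ => Finset.sum_congr rfl fun j' _ => ?_
          split <;> ring
      _ = ((d : ℝ) + 1) * ∑ j, v j a * v j b := by
          rw [Finset.sum_congr rfl fun j _ => Finset.sum_sub_distrib _ _,
            Finset.sum_sub_distrib]
          have e1 : ∀ j : Fin (d + 1),
              (∑ j', if j = j' then ((d : ℝ) + 1) * (v j a * v j' b) else 0)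
                = ((d : ℝ) + 1) * (v j a * v j b) := by
            intro j; rw [Finset.sum_ite_eq]; simp
          have e2 : ∀ j : Fin (d + 1), (∑ j', v j a * v j' b) = 0 := by
            intro j; rw [← Finset.mul_sum, hvsum]; ring
          rw [Finset.sum_congr rfl fun j _ => e1 j, Finset.sum_congr rfl fun j _ => e2 j,
            Finset.mul_sum]
          simp
  set W : Matrix (Fin d) (Fin d) ℝ := Matrix.of fun a b => v (Fin.castSucc a) b with hWdef
  have hE : ∀ x : Fin d → ℝ, (W * Wᵀ).mulVec x = 0 → x = 0 := by
    intro x hx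
    have h1 : ∀ a, ((d : ℝ) + 1) * x a = ∑ b, x b := by
      intro a
      have h2 := congrFun hx a
      simp only [Matrix.mulVec, dotProduct, Matrix.mul_apply, Matrix.transpose_apply,
        Matrix.of_apply, Pi.zero_apply, hWdef] at h2
      have h3 : ∀ b : Fin d, (∑ c, v (Fin.castSucc a) c * v (Fin.castSucc b) c) * x b
          = (if a = b then ((d : ℝ) + 1) * x b else 0) - x b := by
        intro b
        rw [hgram]
        by_cases hab : a = b
        · simp [hab]; ring
        · have hne : Fin.castSucc a ≠ Fin.castSucc b := by
            simpa [Fin.castSucc_inj] using hab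
          simp [hab, hne]
      rw [Finset.sum_congr rfl fun b _ => h3 b, Finset.sum_sub_distrib,
        Finset.sum_ite_eq] at h2
      simp at h2
      linarith [h2]
    have hsx : ∑ b, x b = 0 := by
      have h4 : ∑ a, ((d : ℝ) + 1) * x a = ∑ a : Fin d, ∑ b, x b :=
        Finset.sum_congr rfl fun a _ => h1 a
      rw [← Finset.mul_sum] at h4
      simp [Finset.card_univ] at h4
      nlinarith [h4]
    funext a
    have h5 := h1 a
    rw [hsx] at h5
    have hd1 : ((d : ℝ) + 1) ≠ 0 := by positivity
    simpa using (mul_eq_zero.mp h5).resolve_left hd1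
  have hWdet : W.det ≠ 0 := by
    have hEdet : (W * Wᵀ).det ≠ 0 := by
      intro hc
      obtain ⟨x, hx0, hx⟩ := Matrix.exists_mulVec_eq_zero_iff.mpr hc
      exact hx0 (hE x hx)
    rw [Matrix.det_mul, Matrix.det_transpose] at hEdet
    intro hc; rw [hc] at hEdet; simp at hEdet
  have hGdet : G.det ≠ 0 := by
    intro hc
    obtain ⟨x, hx0, hx⟩ := Matrix.exists_mulVec_eq_zero_iff.mpr hc
    have h6 : ∑ a, x a * ∑ b, (∑ j, v j a * v j b) * x b = 0 := by
      have hGm : ∀ a, G.mulVec x a = ∑ b, (∑ j, v j a * v j b) * x b := fun a => by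
        simp [Matrix.mulVec, dotProduct, hGdef]
      calc ∑ a, x a * ∑ b, (∑ j, v j a * v j b) * x b
          = ∑ a, x a * G.mulVec x a :=
            Finset.sum_congr rfl fun a _ => by rw [hGm a]
        _ = 0 := by rw [hx]; simp
    have hq : ∑ j, (∑ a, v j a * x a) ^ 2 = 0 := by
      rw [← h6]
      calc ∑ j, (∑ a, v j a * x a) ^ 2
          = ∑ j, ∑ a, ∑ b, (v j a * x a) * (v j b * x b) := by
            refine Finset.sum_congr rfl fun j _ => ?_
            rw [sq, Finset.sum_mul_sum]
        _ = ∑ a, ∑ j, ∑ b, (v j a * x a) * (v j b * x b) := Finset.sum_comm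
        _ = ∑ a, ∑ b, ∑ j, (v j a * x a) * (v j b * x b) :=
            Finset.sum_congr rfl fun a _ => Finset.sum_comm
        _ = ∑ a, x a * ∑ b, (∑ j, v j a * v j b) * x b := by
            refine Finset.sum_congr rfl fun a _ => ?_
            rw [Finset.mul_sum]
            refine Finset.sum_congr rfl fun b _ => ?_
            rw [Finset.sum_mul, Finset.mul_sum]
            exact Finset.sum_congr rfl fun j _ => by ring
    have hj : ∀ j, ∑ a, v j a * x a = 0 := by
      intro j
      have := (Finset.sum_eq_zero_iff_of_nonneg (fun j _ => sq_nonneg _)).1 hq j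
        (Finset.mem_univ j)
      exact pow_eq_zero_iff two_ne_zero |>.mp this
    have hWx : W.mulVec x = 0 := by
      funext a
      simp only [Matrix.mulVec, dotProduct, Matrix.of_apply, hWdef, Pi.zero_apply]
      exact hj (Fin.castSucc a)
    exact hWdet (Matrix.exists_mulVec_eq_zero_iff.mp ⟨x, hx0, hWx⟩)
  have hGU : IsUnit G.det := isUnit_iff_ne_zero.2 hGdet
  have hfin : G = ((d : ℝ) + 1) • (1 : Matrix (Fin d) (Fin d) ℝ) := by
    have h7 : G * G * G⁻¹ = (((d : ℝ) + 1) • G) * G⁻¹ := by rw [hGG]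
    rw [mul_assoc, Matrix.mul_nonsing_inv _ hGU, smul_mul_assoc,
      Matrix.mul_nonsing_inv _ hGU] at h7
    simpa using h7
  intro a b
  have h8 := congrFun (congrFun hfin a) b
  simp only [Matrix.smul_apply, Matrix.one_apply, Matrix.of_apply, smul_eq_mul, hGdef] at h8
  rw [h8]
  by_cases hab : a = b <;> simp [hab]

set_option maxHeartbeats 1000000 in
/-- sufficient condition for Assumption 2.1 (Lemma 6.1 in the paper). -/
theorem sufficient_condition_for_assumption (d : ℕ) (hd : 1 ≤ d)
    (v : Fin (d + 1) → Fin d → ℝ)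
    (hnorm : ∀ i, ∑ k, v i k ^ 2 = (d : ℝ))
    (hinner : ∀ i j, i ≠ j → ∑ k, v i k * v j k = -1)
    (κp κm : Fin d → ℝ) (hκp : ∀ k, 0 ≤ κp k) (hκm : ∀ k, 0 ≤ κm k)
    (σ : Matrix (Fin d) (Fin d) ℝ) (hσ : IsUnit σ.det)
    (hsmall : ∀ x : Fin d → ℝ,
      (∀ k, x k ∈ Set.Icc (-(κm k + κp k)) (κm k + κp k)) →
      Real.sqrt (∑ k, (Matrix.vecMul x σᵀ⁻¹ k) ^ 2) < 1 / (2 * Real.sqrt d)) :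
    ∀ β ∈ simplexB d v κp κm,
      IsUnit (σᵀ + β) ∧
      ∀ i j, Matrix.vecMul (Matrix.vecMul (v i) β) (σᵀ + β)⁻¹ ⬝ᵥ v j > -1 := by
  classical
  intro β hβ
  obtain ⟨w, hw, hβeq⟩ := hβ
  set c : Fin d → ℝ := fun k => κp k + κm k with hcdef
  have hc : ∀ k, 0 ≤ c k := fun k => add_nonneg (hκp k) (hκm k)
  have hd0 : (0 : ℝ) < d := by exact_mod_cast hd
  have hd1 : (0 : ℝ) < (d : ℝ) + 1 := by positivity
  have hgram : ∀ i j, ∑ a, v i a * v j a = if i = j then (d : ℝ) else -1 := by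
    intro i j
    by_cases h : i = j
    · subst h
      rw [if_pos rfl, ← hnorm i]
      exact Finset.sum_congr rfl fun a _ => (pow_two (v i a)).symm
    · rw [if_neg h]; exact hinner i j h
  have hG := simplex_gram_cols d v hgram
  have habs : ∀ a, ∑ j, |v j a| ≤ (d : ℝ) + 1 := by
    intro a
    have h1 : (∑ j, |v j a| * 1) ^ 2
        ≤ (∑ j, |v j a| ^ 2) * (∑ _j : Fin (d + 1), (1 : ℝ) ^ 2) :=
      Finset.sum_mul_sq_le_sq_mul_sq _ _ _
    have h2 : ∑ j, |v j a| ^ 2 = (d : ℝ) + 1 := by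
      calc ∑ j, |v j a| ^ 2 = ∑ j, v j a * v j a :=
            Finset.sum_congr rfl fun j _ => by rw [sq_abs, pow_two]
        _ = (d : ℝ) + 1 := by rw [hG a a, if_pos rfl]
    simp only [mul_one, one_pow, Finset.sum_const, Finset.card_univ, Fintype.card_fin,
      nsmul_eq_mul] at h1
    rw [h2] at h1
    push_cast at h1
    nlinarith [Finset.sum_nonneg fun j (_ : j ∈ Finset.univ) => abs_nonneg (v j a), h1]
  have hrowβ : ∀ a k, |β a k| ≤ c k := by
    intro a k
    rw [hβeq a k]
    calc |∑ j, w j k * v j a| ≤ ∑ j, |w j k * v j a| := Finset.abs_sum_le_sum_abs _ _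
      _ ≤ ∑ j, (c k / ((d : ℝ) + 1)) * |v j a| := by
          refine Finset.sum_le_sum fun j _ => ?_
          rw [abs_mul, abs_of_nonneg (hw j k).1]
          exact mul_le_mul_of_nonneg_right (hw j k).2 (abs_nonneg _)
      _ = (c k / ((d : ℝ) + 1)) * ∑ j, |v j a| := (Finset.mul_sum _ _ _).symm
      _ ≤ (c k / ((d : ℝ) + 1)) * ((d : ℝ) + 1) :=
          mul_le_mul_of_nonneg_left (habs a) (div_nonneg (hc k) hd1.le)
      _ = c k := by field_simp
  have hdσT : IsUnit σᵀ.det := by rwa [Matrix.det_transpose]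
  have hsq : ∀ x : Fin d → ℝ, (∀ k, |x k| ≤ c k) →
      ∑ k, (Matrix.vecMul x σᵀ⁻¹ k) ^ 2 < 1 / (4 * d) := by
    intro x hx
    have hbox : ∀ k, x k ∈ Set.Icc (-(κm k + κp k)) (κm k + κp k) := by
      intro k
      have h := abs_le.mp (hx k)
      have hck : c k = κp k + κm k := rfl
      rw [hck] at h
      exact Set.mem_Icc.mpr ⟨by linarith [h.1], by linarith [h.2]⟩
    have h1 := hsmall x hbox
    have hsd : (0 : ℝ) < Real.sqrt d := Real.sqrt_pos.mpr hd0
    have hnn : 0 ≤ ∑ k, (Matrix.vecMul x σᵀ⁻¹ k) ^ 2 :=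
      Finset.sum_nonneg fun k _ => sq_nonneg _
    have h2 : ∑ k, (Matrix.vecMul x σᵀ⁻¹ k) ^ 2
        = Real.sqrt (∑ k, (Matrix.vecMul x σᵀ⁻¹ k) ^ 2) ^ 2 := (Real.sq_sqrt hnn).symm
    rw [h2]
    have h3 : Real.sqrt (∑ k, (Matrix.vecMul x σᵀ⁻¹ k) ^ 2) ^ 2
        < (1 / (2 * Real.sqrt d)) ^ 2 := by
      have := Real.sqrt_nonneg (∑ k, (Matrix.vecMul x σᵀ⁻¹ k) ^ 2)
      nlinarith [h1]
    have h4 : (1 / (2 * Real.sqrt d)) ^ 2 = 1 / (4 * d) := by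
      rw [div_pow, mul_pow, Real.sq_sqrt hd0.le]
      norm_num
    linarith
  set M : Matrix (Fin d) (Fin d) ℝ := β * σᵀ⁻¹ with hMdef
  have hrowM : ∀ a, ∑ k, M a k ^ 2 < 1 / (4 * d) := by
    intro a
    have he : ∀ k, M a k = Matrix.vecMul (fun b => β a b) σᵀ⁻¹ k := by
      intro k
      simp [hMdef, Matrix.mul_apply, Matrix.vecMul, dotProduct]
    rw [Finset.sum_congr rfl fun k _ => by rw [he k]]
    exact hsq _ fun k => hrowβ a k
  have hT : ∑ a, ∑ k, M a k ^ 2 ≤ 1 / 4 := by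
    have h1 : ∑ a : Fin d, ∑ k, M a k ^ 2 ≤ ∑ _a : Fin d, 1 / (4 * (d : ℝ)) :=
      Finset.sum_le_sum fun a _ => (hrowM a).le
    rw [Finset.sum_const, Finset.card_univ, Fintype.card_fin, nsmul_eq_mul] at h1
    have h2 : (d : ℝ) * (1 / (4 * d)) = 1 / 4 := by
      field_simp
    linarith
  have hCS2 : ∀ z : Fin d → ℝ,
      ∑ k, (Matrix.vecMul z M k) ^ 2 ≤ (∑ a, z a ^ 2) * (1 / 4) := by
    intro z
    have h1 : ∀ k, (Matrix.vecMul z M k) ^ 2 ≤ (∑ a, z a ^ 2) * (∑ a, M a k ^ 2) := by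
      intro k
      have he : Matrix.vecMul z M k = ∑ a, z a * M a k := by
        simp [Matrix.vecMul, dotProduct]
      rw [he]
      exact Finset.sum_mul_sq_le_sq_mul_sq _ _ _
    calc ∑ k, (Matrix.vecMul z M k) ^ 2
        ≤ ∑ k, (∑ a, z a ^ 2) * (∑ a, M a k ^ 2) := Finset.sum_le_sum fun k _ => h1 k
      _ = (∑ a, z a ^ 2) * ∑ k, ∑ a, M a k ^ 2 := (Finset.mul_sum _ _ _).symm
      _ = (∑ a, z a ^ 2) * ∑ a, ∑ k, M a k ^ 2 := by rw [Finset.sum_comm]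
      _ ≤ (∑ a, z a ^ 2) * (1 / 4) :=
          mul_le_mul_of_nonneg_left hT (Finset.sum_nonneg fun a _ => sq_nonneg _)
  have hSpos : ∀ z : Fin d → ℝ, z ≠ 0 → 0 < ∑ a, z a ^ 2 := by
    intro z hz
    obtain ⟨a, ha⟩ := Function.ne_iff.mp hz
    have h1 : 0 < z a ^ 2 := lt_of_le_of_ne (sq_nonneg _) (Ne.symm (pow_ne_zero 2 ha))
    exact lt_of_lt_of_le h1
      (Finset.single_le_sum (fun b _ => sq_nonneg (z b)) (Finset.mem_univ a))
  have hU : IsUnit (σᵀ + β) := by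
    rw [Matrix.isUnit_iff_isUnit_det, isUnit_iff_ne_zero]
    intro hdet0
    obtain ⟨z, hz0, hz⟩ := Matrix.exists_vecMul_eq_zero_iff.mpr hdet0
    have h1 : Matrix.vecMul z σᵀ = - Matrix.vecMul z β := by
      rw [Matrix.vecMul_add] at hz
      exact eq_neg_of_add_eq_zero_left hz
    have h2 : z = - Matrix.vecMul z M := by
      have h3 : Matrix.vecMul (Matrix.vecMul z σᵀ) σᵀ⁻¹ = z := by
        rw [Matrix.vecMul_vecMul, Matrix.mul_nonsing_inv _ hdσT, Matrix.vecMul_one]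
      calc z = Matrix.vecMul (Matrix.vecMul z σᵀ) σᵀ⁻¹ := h3.symm
        _ = Matrix.vecMul (- Matrix.vecMul z β) σᵀ⁻¹ := by rw [h1]
        _ = - Matrix.vecMul z (β * σᵀ⁻¹) := by
            rw [Matrix.neg_vecMul, Matrix.vecMul_vecMul]
        _ = - Matrix.vecMul z M := by rw [← hMdef]
    have h4 : ∑ a, z a ^ 2 = ∑ k, (Matrix.vecMul z M k) ^ 2 := by
      refine Finset.sum_congr rfl fun k _ => ?_
      rw [congrFun h2 k, Pi.neg_apply, neg_sq]
    have h5 := hCS2 z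
    have h6 := hSpos z hz0
    rw [← h4] at h5
    linarith
  refine ⟨hU, ?_⟩
  have hUdet : IsUnit (σᵀ + β).det := (Matrix.isUnit_iff_isUnit_det _).mp hU
  intro i j
  have hviβ : ∀ k, |Matrix.vecMul (v i) β k| ≤ c k := by
    intro k
    have h1 : Matrix.vecMul (v i) β k = ((d : ℝ) + 1) * w i k - ∑ j', w j' k := by
      calc Matrix.vecMul (v i) β k = ∑ a, v i a * β a k := by
            simp [Matrix.vecMul, dotProduct]
        _ = ∑ a, ∑ j', w j' k * (v i a * v j' a) := by
            refine Finset.sum_congr rfl fun a _ => ?_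
            rw [hβeq a k, Finset.mul_sum]
            exact Finset.sum_congr rfl fun j' _ => by ring
        _ = ∑ j', ∑ a, w j' k * (v i a * v j' a) := Finset.sum_comm
        _ = ∑ j', w j' k * ∑ a, v i a * v j' a :=
            Finset.sum_congr rfl fun j' _ => (Finset.mul_sum _ _ _).symm
        _ = ∑ j', w j' k * (if i = j' then (d : ℝ) else -1) :=
            Finset.sum_congr rfl fun j' _ => by rw [hgram]
        _ = ∑ j', ((if i = j' then ((d : ℝ) + 1) * w j' k else 0) - w j' k) := by
            refine Finset.sum_congr rfl fun j' _ => ?_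
            split <;> ring
        _ = ((d : ℝ) + 1) * w i k - ∑ j', w j' k := by
            rw [Finset.sum_sub_distrib, Finset.sum_ite_eq]
            simp
    have hw1 : 0 ≤ ((d : ℝ) + 1) * w i k := mul_nonneg hd1.le (hw i k).1
    have hw2 : ((d : ℝ) + 1) * w i k ≤ c k := by
      calc ((d : ℝ) + 1) * w i k ≤ ((d : ℝ) + 1) * (c k / ((d : ℝ) + 1)) :=
            mul_le_mul_of_nonneg_left (hw i k).2 hd1.le
        _ = c k := by field_simp
    have hw3 : 0 ≤ ∑ j', w j' k := Finset.sum_nonneg fun j' _ => (hw j' k).1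
    have hw4 : ∑ j', w j' k ≤ c k := by
      have h2 : ∑ j' : Fin (d + 1), w j' k
          ≤ ∑ _j' : Fin (d + 1), c k / ((d : ℝ) + 1) :=
        Finset.sum_le_sum fun j' _ => (hw j' k).2
      have h3 : ∑ _j' : Fin (d + 1), c k / ((d : ℝ) + 1) = c k := by
        rw [Finset.sum_const, Finset.card_univ, Fintype.card_fin, nsmul_eq_mul]
        push_cast
        field_simp
      exact h2.trans (le_of_eq h3)
    rw [h1, abs_le]
    constructor <;> linarith
  set A := σᵀ + β with hAdef
  set y := Matrix.vecMul (Matrix.vecMul (v i) β) A⁻¹ with hydef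
  set x' := Matrix.vecMul (Matrix.vecMul (v i) β) σᵀ⁻¹ with hxdef
  have hyx : y = x' - Matrix.vecMul y M := by
    have h1 : Matrix.vecMul y A = Matrix.vecMul (v i) β := by
      rw [hydef, Matrix.vecMul_vecMul, Matrix.nonsing_inv_mul _ hUdet, Matrix.vecMul_one]
    have h2 : Matrix.vecMul y (A * σᵀ⁻¹) = x' := by
      rw [← Matrix.vecMul_vecMul, h1, hxdef]
    have h3 : A * σᵀ⁻¹ = 1 + M := by
      rw [hAdef, Matrix.add_mul, Matrix.mul_nonsing_inv _ hdσT, ← hMdef]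
    rw [h3, Matrix.vecMul_add, Matrix.vecMul_one] at h2
    exact eq_sub_of_add_eq h2
  have hxs : ∑ k, x' k ^ 2 < 1 / (4 * d) := hsq _ hviβ
  have hbs : ∑ k, (Matrix.vecMul y M k) ^ 2 ≤ (∑ k, y k ^ 2) * (1 / 4) := hCS2 y
  set b := Matrix.vecMul y M with hbdef
  set P := ∑ k, x' k ^ 2 with hP
  set Q := ∑ k, y k ^ 2 with hQ
  set B := ∑ k, b k ^ 2 with hB
  have hPnn : 0 ≤ P := Finset.sum_nonneg fun k _ => sq_nonneg _
  have hQnn : 0 ≤ Q := Finset.sum_nonneg fun k _ => sq_nonneg _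
  have hBnn : 0 ≤ B := Finset.sum_nonneg fun k _ => sq_nonneg _
  have hInner : -(∑ k, x' k * b k) ≤ Real.sqrt P * Real.sqrt B := by
    have h1 : (∑ k, x' k * b k) ^ 2 ≤ P * B := Finset.sum_mul_sq_le_sq_mul_sq _ _ _
    have h2 : |∑ k, x' k * b k| ≤ Real.sqrt (P * B) := by
      rw [← Real.sqrt_sq_eq_abs]
      exact Real.sqrt_le_sqrt h1
    rw [Real.sqrt_mul hPnn] at h2
    linarith [neg_abs_le (∑ k, x' k * b k)]
  have hQexp : Q = P - 2 * (∑ k, x' k * b k) + B := by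
    have he : ∀ k, y k = x' k - b k := fun k => congrFun hyx k
    calc Q = ∑ k, (x' k ^ 2 - 2 * (x' k * b k) + b k ^ 2) := by
          refine Finset.sum_congr rfl fun k _ => ?_
          rw [he k]; ring
      _ = P - 2 * (∑ k, x' k * b k) + B := by
          rw [Finset.sum_add_distrib, Finset.sum_sub_distrib, ← Finset.mul_sum]
  have hqpb : Real.sqrt Q ≤ Real.sqrt P + Real.sqrt B := by
    have h1 : Q ≤ (Real.sqrt P + Real.sqrt B) ^ 2 := by
      have he : (Real.sqrt P + Real.sqrt B) ^ 2
          = P + 2 * (Real.sqrt P * Real.sqrt B) + B := by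
        rw [add_sq, Real.sq_sqrt hPnn, Real.sq_sqrt hBnn]; ring
      rw [he]; linarith
    calc Real.sqrt Q ≤ Real.sqrt ((Real.sqrt P + Real.sqrt B) ^ 2) := Real.sqrt_le_sqrt h1
      _ = Real.sqrt P + Real.sqrt B := Real.sqrt_sq (by positivity)
  have hbq : Real.sqrt B ≤ Real.sqrt Q / 2 := by
    have h1 : B ≤ (Real.sqrt Q / 2) ^ 2 := by
      rw [div_pow, Real.sq_sqrt hQnn]; linarith
    calc Real.sqrt B ≤ Real.sqrt ((Real.sqrt Q / 2) ^ 2) := Real.sqrt_le_sqrt h1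
      _ = Real.sqrt Q / 2 := Real.sqrt_sq (by positivity)
  have hq2p : Real.sqrt Q ≤ 2 * Real.sqrt P := by linarith
  have hQlt : Q < 1 / (d : ℝ) := by
    have h1 : Q = Real.sqrt Q ^ 2 := (Real.sq_sqrt hQnn).symm
    have h2 : Real.sqrt Q ^ 2 ≤ (2 * Real.sqrt P) ^ 2 := by
      nlinarith [Real.sqrt_nonneg Q, Real.sqrt_nonneg P]
    have h3 : (2 * Real.sqrt P) ^ 2 = 4 * P := by
      rw [mul_pow, Real.sq_sqrt hPnn]; norm_num
    have h5 : 4 * (1 / (4 * (d : ℝ))) = 1 / d := by field_simp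
    nlinarith [hxs]
  have hdot : (y ⬝ᵥ v j) ^ 2 ≤ Q * (d : ℝ) := by
    have h2 := Finset.sum_mul_sq_le_sq_mul_sq Finset.univ y (v j)
    rw [hnorm j] at h2
    exact h2
  have h6 : (y ⬝ᵥ v j) ^ 2 < 1 := by
    have h7 : Q * (d : ℝ) < (1 / (d : ℝ)) * d := mul_lt_mul_of_pos_right hQlt hd0
    have h8 : (1 / (d : ℝ)) * d = 1 := by field_simp
    linarith
  nlinarith [h6, sq_nonneg (y ⬝ᵥ v j + 1)]
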